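/- Let B be a commutative group and H a subgroup of B isomorphic to ℚ/ℤ. Assume that for every b ∈ B there exists n ≥ 1 with b^n ∈ H, and that for every h ∈ H and every n ≥ 1 the equation x^n = h has at most n solutions in B. Then H = B. -/

import Mathlib

/-- Let `B` be a commutative group and `H` a subgroup isomorphic to `ℚ/ℤ`.
If every element of `B` has some positive power in `H`, and for every `h ∈ H` and `n ≥ 1`
the equation `x ^ n = h` has at most `n` solutions in `B`, then `H = B`. -/
theorem stmt_3 (B : Type*) [CommGroup B] (H : Subgroup B)
    (e : H ≃* Multiplicative (ℚ ⧸ AddSubgroup.zmultiples (1 : ℚ)))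
    (halg : ∀ b : B, ∃ n : ℕ, 1 ≤ n ∧ b ^ n ∈ H)
    (hsol : ∀ h ∈ H, ∀ n : ℕ, 1 ≤ n →
      ∀ s : Finset B, (∀ x ∈ s, x ^ n = h) → s.card ≤ n) :
    H = ⊤ := by
  classical
  rw [eq_top_iff]
  intro b _
  by_contra hbH
  obtain ⟨n, hn, hbn⟩ := halg b
  have hn0 : (n : ℚ) ≠ 0 := by positivity
  -- representative of e ⟨b^n, hbn⟩
  obtain ⟨r, hr⟩ := QuotientAddGroup.mk_surjective
    (Multiplicative.toAdd (e ⟨b ^ n, hbn⟩))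
  -- root in H
  set c : H := e.symm (Multiplicative.ofAdd ((r / n : ℚ) : ℚ ⧸ AddSubgroup.zmultiples (1 : ℚ)))
    with hc
  have hcn : (c : B) ^ n = b ^ n := by
    have : c ^ n = ⟨b ^ n, hbn⟩ := by
      rw [hc, ← map_pow]
      have : (Multiplicative.ofAdd ((r / n : ℚ) : ℚ ⧸ AddSubgroup.zmultiples (1 : ℚ))) ^ n
          = Multiplicative.ofAdd (((r : ℚ) : ℚ ⧸ AddSubgroup.zmultiples (1 : ℚ))) := by
        rw [← ofAdd_nsmul]
        congr 1
        rw [← QuotientAddGroup.mk_nsmul]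
        congr 1
        rw [nsmul_eq_mul]
        field_simp
      rw [this, hr]
      simp
    simpa using congrArg (Subtype.val) this
  -- torsion elements
  set t : Fin n → H := fun k =>
    e.symm (Multiplicative.ofAdd (((k : ℚ) / n : ℚ) : ℚ ⧸ AddSubgroup.zmultiples (1 : ℚ))) with ht
  have htn : ∀ k : Fin n, (t k : B) ^ n = 1 := by
    intro k
    have : t k ^ n = 1 := by
      rw [ht, ← map_pow, ← ofAdd_nsmul, ← QuotientAddGroup.mk_nsmul]
      have h1 : (n : ℚ) • ((k : ℚ) / n) = (k : ℚ) := by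
        rw [smul_eq_mul]
        field_simp
      have h2 : ((n • ((k : ℚ) / n) : ℚ) : ℚ ⧸ AddSubgroup.zmultiples (1 : ℚ)) = 0 := by
        rw [QuotientAddGroup.eq_zero_iff]
        refine ⟨(k : ℤ), ?_⟩
        push_cast
        simp only [zsmul_eq_mul, nsmul_eq_mul, Int.cast_natCast, mul_one]
        field_simp
      rw [h2]
      simp
    simpa using congrArg (Subtype.val) this
  set f : Fin n → B := fun k => (c : B) * (t k : B) with hf
  have hfH : ∀ k, f k ∈ H := fun k => mul_mem c.2 (t k).2
  have hfn : ∀ k, f k ^ n = b ^ n := by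
    intro k
    rw [hf]
    simp only [mul_pow, hcn, htn k, mul_one]
  have hfinj : Function.Injective f := by
    intro k j hkj
    have h1 : t k = t j := by
      have := mul_left_cancel hkj
      exact Subtype.ext this
    have h2 : (Multiplicative.ofAdd (((k : ℚ) / n : ℚ) : ℚ ⧸ AddSubgroup.zmultiples (1 : ℚ)))
        = Multiplicative.ofAdd (((j : ℚ) / n : ℚ) : ℚ ⧸ AddSubgroup.zmultiples (1 : ℚ)) := by
      apply e.symm.injective
      simp only [ht] at h1
      exact h1
    have h3 : (((k : ℚ) / n : ℚ) : ℚ ⧸ AddSubgroup.zmultiples (1 : ℚ))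
        = (((j : ℚ) / n : ℚ) : ℚ ⧸ AddSubgroup.zmultiples (1 : ℚ)) :=
      Multiplicative.ofAdd.injective h2
    rw [QuotientAddGroup.eq] at h3
    obtain ⟨m, hm⟩ := h3
    simp only [zsmul_eq_mul, mul_one] at hm
    have hm2 : (m : ℚ) = (j : ℚ) / n - (k : ℚ) / n := by linarith
    have hm' : (m : ℚ) * n = (j : ℚ) - (k : ℚ) := by
      rw [hm2]
      field_simp
    have hmz : m * (n : ℤ) = (j : ℤ) - (k : ℤ) := by exact_mod_cast hm'
    have hk := k.isLt
    have hj := j.isLt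
    have : m = 0 := by
      rcases lt_trichotomy m 0 with h | h | h
      · nlinarith [mul_le_mul_of_nonneg_right (show m ≤ -1 by omega) (show (0:ℤ) ≤ n by positivity)]
      · exact h
      · nlinarith [mul_le_mul_of_nonneg_right (show (1:ℤ) ≤ m by omega) (show (0:ℤ) ≤ n by positivity)]
    rw [this] at hmz
    have : (k : ℤ) = (j : ℤ) := by omega
    exact Fin.ext (by exact_mod_cast this)
  -- build the finset of solutions
  set s : Finset B := insert b (Finset.univ.image f) with hs
  have hbnotim : b ∉ Finset.univ.image f := by
    simp only [Finset.mem_image]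
    rintro ⟨k, -, hk⟩
    exact hbH (hk ▸ hfH k)
  have hcard : s.card = n + 1 := by
    rw [hs, Finset.card_insert_of_notMem hbnotim,
      Finset.card_image_of_injective _ hfinj, Finset.card_univ, Fintype.card_fin]
  have hall : ∀ x ∈ s, x ^ n = b ^ n := by
    intro x hx
    rw [hs, Finset.mem_insert] at hx
    rcases hx with rfl | hx
    · rfl
    · obtain ⟨k, -, rfl⟩ := Finset.mem_image.mp hx
      exact hfn k
  have := hsol (b ^ n) hbn n hn s hall
  omega
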